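/- Fix a real number a ∈ [0,1]. For each integer d ≥ 1 let ω^{(d)} = (ω^{(d)}_j)_{j≥1} be any digit sequence with entries in {0,1,…,d} whose first digit is ω^{(d)}_1 = ⌊a·d⌋, and let G_d(ω^{(d)}) = (1/(d+1)) · ∑_{j=1}^∞ (1/(d+1))^{j−1} · ∑_{i=0}^{ω^{(d)}_j−1} ( j − 2(σ_j − ω^{(d)}_j + i)/d ), where σ_j = ω^{(d)}_1 + ⋯ + ω^{(d)}_j. Then lim_{d→∞} G_d(ω^{(d)}) = a(1−a). In particular, lim_{d→∞} ⌊a·d⌋·(d+1−⌊a·d⌋)/(d(d+1)) = a(1−a). -/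

import Mathlib

open Filter Finset

/-- The function `𝒯̃_d` of the paper's Section 4, expressed in digit
coordinates: for a digit sequence `ω = (ω_j)_{j≥1}` with digits in `{0,…,d}`,
`G_d(ω) = (1/(d+1)) · ∑_{j=1}^∞ (1/(d+1))^{j−1} ∑_{i=0}^{ω_j−1}
(j − 2(σ_j − ω_j + i)/d)`, where `σ_j = ω_1 + ⋯ + ω_j`. -/
noncomputable def Gd (d : ℕ) (ω : ℕ → ℕ) : ℝ :=
  (1 / ((d : ℝ) + 1)) * ∑' j : ℕ, (1 / ((d : ℝ) + 1)) ^ j *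
    ∑ i ∈ Finset.range (ω (j + 1)),
      (((j : ℝ) + 1) -
        2 * (((∑ t ∈ Finset.Icc 1 (j + 1), ω t : ℕ) : ℝ) - (ω (j + 1) : ℝ) + (i : ℝ)) / (d : ℝ))

lemma sum_range_cast (m : ℕ) : (∑ i ∈ Finset.range m, (i : ℝ)) = m * (m - 1) / 2 := by
  induction m with
  | zero => simp
  | succ n ih => rw [Finset.sum_range_succ, ih]; push_cast; ring

lemma Gd_decomp (d : ℕ) (hd : 1 ≤ d) (ω : ℕ → ℕ) (hω : ∀ j, 1 ≤ j → ω j ≤ d) :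
    |Gd d ω - (ω 1 : ℝ) * ((d : ℝ) + 1 - (ω 1 : ℝ)) / ((d : ℝ) * ((d : ℝ) + 1))| ≤
      3 / ((d : ℝ) + 1) := by
  have hD : (1 : ℝ) ≤ (d : ℝ) := by exact_mod_cast hd
  have hD0 : (0 : ℝ) < (d : ℝ) := by linarith
  have hD1 : (0 : ℝ) < (d : ℝ) + 1 := by linarith
  set D : ℝ := (d : ℝ) with hDdef
  set x : ℝ := 1 / (D + 1) with hxdef
  have hx0 : 0 < x := by positivity
  have hx1 : x < 1 := by
    rw [hxdef, div_lt_one hD1]; linarith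
  have hxn : ‖x‖ < 1 := by rw [Real.norm_eq_abs, abs_of_pos hx0]; exact hx1
  set S : ℕ → ℝ := fun j => ∑ i ∈ Finset.range (ω (j + 1)),
      (((j : ℝ) + 1) -
        2 * (((∑ t ∈ Finset.Icc 1 (j + 1), ω t : ℕ) : ℝ) - (ω (j + 1) : ℝ) + (i : ℝ)) / D)
    with hSdef
  set f : ℕ → ℝ := fun j => x ^ j * S j with hfdef
  -- bound on each term
  have hS : ∀ j, |S j| ≤ D * (j + 1) := by
    intro j
    have h1 : |S j| ≤ ∑ i ∈ Finset.range (ω (j + 1)), ((j : ℝ) + 1) := by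
      refine (Finset.abs_sum_le_sum_abs _ _).trans (Finset.sum_le_sum fun i hi => ?_)
      have hσω : (ω (j+1) : ℝ) ≤ ((∑ t ∈ Finset.Icc 1 (j + 1), ω t : ℕ) : ℝ) := by
        have : ω (j+1) ≤ ∑ t ∈ Finset.Icc 1 (j + 1), ω t :=
          Finset.single_le_sum (fun t _ => Nat.zero_le _)
            (Finset.mem_Icc.2 ⟨Nat.le_add_left 1 j, le_refl _⟩)
        exact_mod_cast this
      have hσup : ((∑ t ∈ Finset.Icc 1 (j + 1), ω t : ℕ) : ℝ) ≤ ((j : ℝ) + 1) * D := by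
        have : ∑ t ∈ Finset.Icc 1 (j + 1), ω t ≤ ∑ t ∈ Finset.Icc 1 (j + 1), d :=
          Finset.sum_le_sum fun t ht => hω t (Finset.mem_Icc.1 ht).1
        have h2 : ∑ t ∈ Finset.Icc 1 (j + 1), d = (j+1) * d := by
          rw [Finset.sum_const, Nat.card_Icc]; simp [smul_eq_mul]
        rw [h2] at this
        have h3 : ((∑ t ∈ Finset.Icc 1 (j + 1), ω t : ℕ) : ℝ) ≤ (((j+1)*d : ℕ) : ℝ) :=
          Nat.cast_le.2 this
        rw [hDdef]; push_cast at h3 ⊢; linarith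
      have hi' : (i : ℝ) ≤ (ω (j+1) : ℝ) - 1 := by
        have h4 : (i : ℝ) + 1 ≤ (ω (j+1) : ℝ) := by
          exact_mod_cast Nat.succ_le_of_lt (Finset.mem_range.1 hi)
        linarith
      have hc0 : (0:ℝ) ≤ ((∑ t ∈ Finset.Icc 1 (j + 1), ω t : ℕ) : ℝ) - (ω (j + 1) : ℝ) + (i : ℝ) := by
        have : (0:ℝ) ≤ (i:ℝ) := Nat.cast_nonneg i
        linarith
      have hcU : ((∑ t ∈ Finset.Icc 1 (j + 1), ω t : ℕ) : ℝ) - (ω (j + 1) : ℝ) + (i : ℝ)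
          ≤ ((j : ℝ) + 1) * D := by linarith
      rw [abs_le]
      constructor
      · have : 2 * (((∑ t ∈ Finset.Icc 1 (j + 1), ω t : ℕ) : ℝ) - (ω (j + 1) : ℝ) + (i : ℝ)) / D
            ≤ 2 * ((j : ℝ) + 1) := by
          rw [div_le_iff₀ hD0]
          nlinarith
        linarith
      · have : 0 ≤ 2 * (((∑ t ∈ Finset.Icc 1 (j + 1), ω t : ℕ) : ℝ) - (ω (j + 1) : ℝ) + (i : ℝ)) / D := by
          positivity
        linarith
    have h2 : (∑ i ∈ Finset.range (ω (j + 1)), ((j : ℝ) + 1)) ≤ D * ((j:ℝ) + 1) := by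
      rw [Finset.sum_const, Finset.card_range, nsmul_eq_mul]
      have : (ω (j+1) : ℝ) ≤ D := by rw [hDdef]; exact_mod_cast hω (j+1) (Nat.le_add_left 1 j)
      nlinarith
    exact h1.trans h2
  -- summability pieces
  have hsg : Summable (fun j : ℕ => x ^ j) := summable_geometric_of_lt_one hx0.le hx1
  have hsj : Summable (fun j : ℕ => (j : ℝ) * x ^ j) := by
    have := summable_pow_mul_geometric_of_norm_lt_one 1 hxn
    simpa using this
  have hbound : ∀ j, ‖f j‖ ≤ D * ((j:ℝ)+1) * x ^ j := by
    intro j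
    rw [hfdef]
    simp only [Real.norm_eq_abs, abs_mul, abs_pow, abs_of_pos hx0]
    calc x ^ j * |S j| ≤ x ^ j * (D * ((j:ℝ)+1)) := by
          exact mul_le_mul_of_nonneg_left (hS j) (by positivity)
      _ = D * ((j:ℝ)+1) * x ^ j := by ring
  have hsumg : Summable (fun j : ℕ => D * ((j:ℝ)+1) * x ^ j) := by
    have : (fun j : ℕ => D * ((j:ℝ)+1) * x ^ j)
        = fun j : ℕ => D * ((j:ℝ) * x ^ j) + D * x ^ j := by
      funext j; ring
    rw [this]
    exact ((hsj.mul_left D).add (hsg.mul_left D))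
  have hsum : Summable f := by
    refine Summable.of_norm_bounded hsumg hbound
  -- split off first term
  have hsplit : ∑' j, f j = f 0 + ∑' j, f (j + 1) := hsum.tsum_eq_zero_add
  have hGd : Gd d ω = x * (f 0 + ∑' j, f (j + 1)) := by
    rw [Gd, ← hsplit]
  -- compute f 0
  have hf0 : x * f 0 = (ω 1 : ℝ) * (D + 1 - (ω 1 : ℝ)) / (D * (D + 1)) := by
    have hS0 : S 0 = (ω 1 : ℝ) - (ω 1 : ℝ) * ((ω 1 : ℝ) - 1) / D := by
      rw [hSdef]
      simp only [Nat.zero_add, Finset.Icc_self, Finset.sum_singleton, Nat.cast_zero]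
      have : ∀ i ∈ Finset.range (ω 1),
          ((0:ℝ) + 1 - 2 * ((ω 1 : ℝ) - (ω 1 : ℝ) + (i:ℝ)) / D) = 1 - 2 * (i:ℝ) / D := by
        intro i _; ring
      rw [Finset.sum_congr rfl this, Finset.sum_sub_distrib, Finset.sum_const,
        Finset.card_range, nsmul_eq_mul]
      have : ∑ i ∈ Finset.range (ω 1), 2 * (i:ℝ) / D
          = 2 / D * ∑ i ∈ Finset.range (ω 1), (i:ℝ) := by
        rw [Finset.mul_sum]; exact Finset.sum_congr rfl fun i _ => by ring
      rw [this, sum_range_cast]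
      field_simp
    rw [hfdef]
    simp only [pow_zero, one_mul]
    rw [hS0, hxdef]
    field_simp
    ring
  -- tail bound
  have htail : ‖∑' j, f (j + 1)‖ ≤ 3 := by
    have hsum1 : Summable (fun j => f (j + 1)) := (summable_nat_add_iff 1).2 hsum
    have hb2 : ∀ j : ℕ, ‖f (j + 1)‖ ≤ D * x * ((j:ℝ) * x ^ j) + 2 * D * x * x ^ j := by
      intro j
      have := hbound (j + 1)
      calc ‖f (j+1)‖ ≤ D * (((j:ℝ)+1)+1) * x ^ (j+1) := by push_cast at this ⊢; linarith
        _ = D * x * ((j:ℝ) * x ^ j) + 2 * D * x * x ^ j := by ring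
    have hsumb : Summable (fun j : ℕ => D * x * ((j:ℝ) * x ^ j) + 2 * D * x * x ^ j) :=
      (hsj.mul_left _).add (hsg.mul_left _)
    calc ‖∑' j, f (j + 1)‖ ≤ ∑' j, ‖f (j + 1)‖ := norm_tsum_le_tsum_norm hsum1.norm
      _ ≤ ∑' j : ℕ, (D * x * ((j:ℝ) * x ^ j) + 2 * D * x * x ^ j) :=
          Summable.tsum_le_tsum hb2 hsum1.norm hsumb
      _ = D * x * (x / (1 - x)^2) + 2 * D * x * (1 - x)⁻¹ := by
          rw [Summable.tsum_add (hsj.mul_left _) (hsg.mul_left _), tsum_mul_left, tsum_mul_left,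
            tsum_geometric_of_lt_one hx0.le hx1]
          rw [show (∑' j : ℕ, (j:ℝ) * x ^ j) = x / (1 - x)^2 from
            tsum_coe_mul_geometric_of_norm_lt_one hxn]
      _ ≤ 3 := by
          have h1x : 1 - x = D / (D + 1) := by rw [hxdef]; field_simp; ring
          rw [h1x, hxdef]
          rw [div_pow]
          field_simp
          nlinarith [mul_le_mul_of_nonneg_right (mul_le_mul_of_nonneg_left hD hD0.le)
            (sq_nonneg (D+1))]
  -- conclude
  rw [hGd]
  have : x * (f 0 + ∑' j, f (j + 1)) - (ω 1 : ℝ) * (D + 1 - (ω 1 : ℝ)) / (D * (D + 1))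
      = x * ∑' j, f (j + 1) := by rw [mul_add, hf0]; ring
  rw [this, abs_mul, abs_of_pos hx0, hxdef]
  have h3 : (3:ℝ)/(D+1) = 1/(D+1)*3 := by ring
  rw [h3]
  exact mul_le_mul_of_nonneg_left (by simpa [Real.norm_eq_abs] using htail) (by positivity)

/-- The limit of limiting curves: as `d → ∞` the normalized limiting curves
`𝒯̃_d` converge pointwise to the parabola `a ↦ a(1−a)`. -/
theorem Gd_tendsto_parabola
    (a : ℝ) (ha : a ∈ Set.Icc (0 : ℝ) 1)
    (ω : ℕ → ℕ → ℕ)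
    (hω : ∀ d, 1 ≤ d → ∀ j, 1 ≤ j → ω d j ≤ d)
    (hω1 : ∀ d, 1 ≤ d → ω d 1 = ⌊a * (d : ℝ)⌋₊) :
    Filter.Tendsto (fun d : ℕ => Gd d (ω d)) Filter.atTop (nhds (a * (1 - a))) ∧
    Filter.Tendsto
      (fun d : ℕ => (⌊a * (d : ℝ)⌋₊ : ℝ) * ((d : ℝ) + 1 - (⌊a * (d : ℝ)⌋₊ : ℝ)) /
        ((d : ℝ) * ((d : ℝ) + 1)))
      Filter.atTop (nhds (a * (1 - a))) := by
  set T : ℕ → ℝ := fun d : ℕ => (⌊a * (d : ℝ)⌋₊ : ℝ) * ((d : ℝ) + 1 - (⌊a * (d : ℝ)⌋₊ : ℝ)) /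
        ((d : ℝ) * ((d : ℝ) + 1)) with hTdef
  have hinv : Filter.Tendsto (fun d : ℕ => 1 / ((d : ℝ) + 1)) Filter.atTop (nhds 0) :=
    tendsto_one_div_add_atTop_nhds_zero_nat
  have h1 : Filter.Tendsto (fun d : ℕ => (⌊a * (d : ℝ)⌋₊ : ℝ) / (d : ℝ))
      Filter.atTop (nhds a) :=
    (tendsto_nat_floor_mul_div_atTop ha.1).comp tendsto_natCast_atTop_atTop
  have h2 : Filter.Tendsto (fun d : ℕ => (d : ℝ) / ((d : ℝ) + 1)) Filter.atTop (nhds 1) := by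
    have : Filter.Tendsto (fun d : ℕ => 1 - 1 / ((d : ℝ) + 1)) Filter.atTop (nhds (1 - 0)) :=
      tendsto_const_nhds.sub hinv
    rw [sub_zero] at this
    refine this.congr fun d => ?_
    have : ((d : ℝ) + 1) ≠ 0 := by positivity
    field_simp
    ring
  have h3 : Filter.Tendsto (fun d : ℕ => (⌊a * (d : ℝ)⌋₊ : ℝ) / ((d : ℝ) + 1))
      Filter.atTop (nhds a) := by
    have := h1.mul h2
    rw [mul_one] at this
    refine this.congr' ?_
    filter_upwards [Filter.eventually_ge_atTop 1] with d hd
    have hd0 : (d : ℝ) ≠ 0 := by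
      have : (1 : ℝ) ≤ (d : ℝ) := by exact_mod_cast hd
      linarith
    have hd1 : ((d : ℝ) + 1) ≠ 0 := by positivity
    field_simp
  have hT : Filter.Tendsto T Filter.atTop (nhds (a * (1 - a))) := by
    have := h1.mul (((tendsto_const_nhds : Filter.Tendsto (fun _ : ℕ => (1:ℝ)) Filter.atTop (nhds 1))).sub h3)
    refine this.congr' ?_
    filter_upwards [Filter.eventually_ge_atTop 1] with d hd
    have hd0 : (d : ℝ) ≠ 0 := by
      have : (1 : ℝ) ≤ (d : ℝ) := by exact_mod_cast hd
      linarith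
    have hd1 : ((d : ℝ) + 1) ≠ 0 := by positivity
    rw [hTdef]
    field_simp
  refine ⟨?_, hT⟩
  refine hT.congr_dist ?_
  have h30 : Filter.Tendsto (fun d : ℕ => 3 / ((d : ℝ) + 1)) Filter.atTop (nhds 0) := by
    have := hinv.const_mul 3
    rw [mul_zero] at this
    refine this.congr fun d => by ring
  refine squeeze_zero' ?_ ?_ h30
  · filter_upwards with d; exact dist_nonneg
  · filter_upwards [Filter.eventually_ge_atTop 1] with d hd
    have := Gd_decomp d hd (ω d) (hω d hd)
    rw [hω1 d hd] at this
    rw [Real.dist_eq]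
    rw [abs_sub_comm]
    exact this
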